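/- Let GP(q,4) (q ≡ 1 mod 8) be quasi-strongly regular with common-neighbor parameters c_1, c_2, c_3, c_4, where c_i = |N(0) ∩ N(v)| for v ∈ α^{i−1}(F_q*)^4. Then the parameters satisfy c_2 + c_4 = 2 c_3. -/

import Mathlib

open scoped Classical

namespace GP4

open Finset


variable {F : Type*} [Field F] [Fintype F]

def P (α : Fˣ) (a : ℤ) (x : F) : Prop := ∃ y : Fˣ, x = ((α ^ a * y ^ 4 : Fˣ) : F)

lemma P_congr {α : Fˣ} {a b : ℤ} (h : (4:ℤ) ∣ a - b) {x : F} : P α a x ↔ P α b x := by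
  obtain ⟨k, hk⟩ := h
  have key : ∀ (u v : ℤ) (m : ℤ), u - v = 4 * m → ∀ z : F, P α u z → P α v z := by
    rintro u v m hm z ⟨y, rfl⟩
    refine ⟨α ^ m * y, ?_⟩
    congr 1
    rw [mul_pow, ← zpow_natCast (α ^ m) 4, ← zpow_mul, ← mul_assoc, ← zpow_add]
    have h4 : v + m * ((4:ℕ):ℤ) = u := by push_cast; omega
    rw [h4]
  constructor
  · exact key a b k hk _
  · exact key b a (-k) (by omega) _

lemma order_eq {α : Fˣ} (hα : ∀ x : Fˣ, x ∈ Subgroup.zpowers α) :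
    orderOf α = Fintype.card F - 1 := by
  rw [orderOf_eq_card_of_forall_mem_zpowers hα, Nat.card_eq_fintype_card, Fintype.card_units]

lemma P_dvd_of_both {α : Fˣ} (hα : ∀ x : Fˣ, x ∈ Subgroup.zpowers α)
    (h8 : 8 ∣ Fintype.card F - 1) {a b : ℤ} {x : F} (ha : P α a x) (hb : P α b x) :
    (4:ℤ) ∣ a - b := by
  obtain ⟨y, hy⟩ := ha
  obtain ⟨z, hz⟩ := hb
  have hu : (α ^ a * y ^ 4 : Fˣ) = α ^ b * z ^ 4 := Units.ext (by rw [← hy, ← hz])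
  obtain ⟨m, hm⟩ := Subgroup.mem_zpowers_iff.mp (hα (z * y⁻¹))
  have e1 : ((α : F)) ^ a * (y : F) ^ 4 = ((α : F)) ^ b * (z : F) ^ 4 := by
    have h := congrArg Units.val hu
    push_cast at h
    exact h
  have e2 : ((α : F)) ^ (4 * m) = ((z : F) * ((y : F))⁻¹) ^ 4 := by
    have h1 : α ^ (4 * m) = (α ^ m) ^ (4:ℕ) := by
      have hmm : m * ((4:ℕ):ℤ) = 4 * m := by push_cast; ring
      rw [← zpow_natCast (α ^ m) 4, ← zpow_mul, hmm]
    have h2 := congrArg Units.val h1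
    rw [hm] at h2
    push_cast at h2
    exact h2
  have hsplit : α ^ (a - b - 4 * m) = α ^ a * (α ^ b)⁻¹ * (α ^ (4 * m))⁻¹ := by
    rw [← zpow_neg, ← zpow_neg, ← zpow_add, ← zpow_add]
    congr 1
  have hy0 : (y : F) ≠ 0 := Units.ne_zero _
  have hz0 : (z : F) ≠ 0 := Units.ne_zero _
  have ha0 : (α : F) ≠ 0 := Units.ne_zero _
  have hb0 : ((α : F)) ^ b ≠ 0 := zpow_ne_zero _ ha0
  have hX0 : ((z : F) * ((y : F))⁻¹) ^ 4 ≠ 0 := pow_ne_zero _ (mul_ne_zero hz0 (inv_ne_zero hy0))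
  have hA : ((α : F)) ^ a = ((α : F)) ^ b * ((z : F) * ((y : F))⁻¹) ^ 4 := by
    have hXsplit : ((z : F) * ((y : F))⁻¹) ^ 4 = (z : F) ^ 4 * ((y : F) ^ 4)⁻¹ := by
      rw [mul_pow, inv_pow]
    rw [hXsplit, ← mul_assoc, ← e1, mul_assoc, mul_inv_cancel₀ (pow_ne_zero 4 hy0), mul_one]
  have hval : ((α ^ (a - b - 4 * m) : Fˣ) : F) = 1 := by
    rw [hsplit]
    push_cast
    rw [e2, hA]
    calc ((α : F)) ^ b * ((z : F) * ((y : F))⁻¹) ^ 4 * (((α : F)) ^ b)⁻¹ *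
          ((((z : F) * ((y : F))⁻¹) ^ 4))⁻¹
        = (((α : F)) ^ b * (((α : F)) ^ b)⁻¹) *
          (((z : F) * ((y : F))⁻¹) ^ 4 * ((((z : F) * ((y : F))⁻¹) ^ 4))⁻¹) := by ring
      _ = 1 := by rw [mul_inv_cancel₀ hb0, mul_inv_cancel₀ hX0, mul_one]

  have key : α ^ (a - b - 4 * m) = 1 := Units.val_eq_one.mp hval
  have hdvd : ((orderOf α : ℤ)) ∣ (a - b - 4 * m) := orderOf_dvd_iff_zpow_eq_one.mpr key
  have h4 : (4:ℤ) ∣ (orderOf α : ℤ) := by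
    rw [order_eq hα]
    obtain ⟨s, hs⟩ := h8
    exact ⟨2 * s, by push_cast [hs]; ring⟩
  have : (4:ℤ) ∣ a - b - 4 * m := dvd_trans h4 hdvd
  omega

lemma P_exists {α : Fˣ} (hα : ∀ x : Fˣ, x ∈ Subgroup.zpowers α) {x : F} (hx : x ≠ 0) :
    ∃ a : ℤ, 0 ≤ a ∧ a < 4 ∧ P α a x := by
  obtain ⟨n, hn⟩ := Subgroup.mem_zpowers_iff.mp (hα (Units.mk0 x hx))
  refine ⟨n % 4, Int.emod_nonneg n (by norm_num), Int.emod_lt_of_pos n (by norm_num),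
    α ^ (n / 4), ?_⟩
  have key : α ^ (n % 4) * (α ^ (n / 4)) ^ (4:ℕ) = α ^ n := by
    rw [← zpow_natCast (α ^ (n / 4)) 4, ← zpow_mul, ← zpow_add]
    congr 1
    push_cast
    omega
  rw [key, hn]
  rfl

lemma neg_one_pow {α : Fˣ} (hα : ∀ x : Fˣ, x ∈ Subgroup.zpowers α)
    (h8 : 8 ∣ Fintype.card F - 1) : ∃ δ : Fˣ, δ ^ 4 = -1 := by
  obtain ⟨s, hs⟩ : 8 ∣ orderOf α := by rw [order_eq hα]; exact h8
  have hs0 : s ≠ 0 := by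
    have := orderOf_pos α
    omega
  refine ⟨α ^ s, ?_⟩
  have h2u : ((α ^ s) ^ 4) ^ 2 = (1 : Fˣ) := by
    rw [← pow_mul, ← pow_mul]
    have hexp : s * (4 * 2) = orderOf α := by omega
    rw [hexp, pow_orderOf_eq_one]
  have h2 : (((α ^ s) ^ 4 : Fˣ) : F) ^ 2 = 1 := by
    rw [← Units.val_pow_eq_pow_val, h2u, Units.val_one]
  set t : F := (((α ^ s) ^ 4 : Fˣ) : F) with ht
  have hfact : (t - 1) * (t + 1) = 0 := by linear_combination h2
  rcases mul_eq_zero.mp hfact with h | h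
  · exfalso
    have h1 : t = 1 := by rwa [sub_eq_zero] at h
    have hu : (α ^ s) ^ 4 = (1 : Fˣ) := Units.ext (by simpa [ht] using h1)
    rw [← pow_mul] at hu
    have hdvd : orderOf α ∣ s * 4 := orderOf_dvd_of_pow_eq_one hu
    rw [hs] at hdvd
    have := Nat.le_of_dvd (by omega) hdvd
    omega
  · have h1 : t = -1 := eq_neg_of_add_eq_zero_left h
    exact Units.ext (by simpa [ht] using h1)


lemma P_iff {α : Fˣ} {a : ℤ} {x : F} :
    P α a x ↔ ∃ y : Fˣ, x = ((α : F)) ^ a * ((y : F)) ^ 4 := by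
  constructor <;> rintro ⟨y, rfl⟩ <;> refine ⟨y, ?_⟩ <;> push_cast <;> ring

lemma P_ne_zero {α : Fˣ} {a : ℤ} {x : F} (h : P α a x) : x ≠ 0 := by
  obtain ⟨y, rfl⟩ := h; exact Units.ne_zero _



lemma P_neg' {α : Fˣ} (hδ : ∃ δ : Fˣ, δ ^ 4 = -1) {a : ℤ} {x : F} (h : P α a x) :
    P α a (-x) := by
  obtain ⟨δ, hδ4⟩ := hδ
  obtain ⟨y, rfl⟩ := h
  refine ⟨δ * y, ?_⟩
  rw [← Units.val_neg]
  congr 1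
  rw [mul_pow, hδ4, neg_one_mul, mul_neg]

lemma P_mul' {α : Fˣ} {a : ℤ} {x : F} (c : ℤ) (h : P α a x) :
    P α (a + c) (((α : F)) ^ c * x) := by
  rw [P_iff] at h ⊢
  obtain ⟨y, rfl⟩ := h
  refine ⟨y, ?_⟩
  rw [← mul_assoc, ← zpow_add₀ (Units.ne_zero α), add_comm c a]

noncomputable def Dset (α : Fˣ) (a b : ℤ) : Finset F :=
  univ.filter (fun x => P α a x ∧ P α b (x - 1))

noncomputable def D (α : Fˣ) (a b : ℤ) : ℕ := (Dset α a b).card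

lemma mem_Dset {α : Fˣ} {a b : ℤ} {x : F} :
    x ∈ Dset α a b ↔ P α a x ∧ P α b (x - 1) := by
  simp [Dset]

lemma D_congr {α : Fˣ} {a a' b b' : ℤ} (h1 : (4:ℤ) ∣ a - a') (h2 : (4:ℤ) ∣ b - b') :
    D α a b = D α a' b' := by
  unfold D Dset
  congr 1
  exact filter_congr (fun x _ => by rw [P_congr h1, P_congr h2])

lemma D_symm {α : Fˣ} (hδ : ∃ δ : Fˣ, δ ^ 4 = -1) (a b : ℤ) : D α a b = D α b a := by
  unfold D
  apply card_nbij' (fun x => 1 - x) (fun x => 1 - x)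
  · intro x hx
    simp only [mem_coe] at hx ⊢
    rw [mem_Dset] at hx ⊢
    refine ⟨?_, ?_⟩
    · have := P_neg' hδ hx.2
      rwa [neg_sub] at this
    · have := P_neg' hδ hx.1
      rwa [show 1 - x - 1 = -x by ring]
  · intro x hx
    simp only [mem_coe] at hx ⊢
    rw [mem_Dset] at hx ⊢
    refine ⟨?_, ?_⟩
    · have := P_neg' hδ hx.2
      rwa [neg_sub] at this
    · have := P_neg' hδ hx.1
      rwa [show 1 - x - 1 = -x by ring]
  · intro x _; ring
  · intro x _; ring

lemma tau_mem {α : Fˣ} {a b : ℤ} {x : F} (hx : x ∈ Dset α a b) :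
    x * (x - 1)⁻¹ ∈ Dset α (a - b) (-b) := by
  rw [mem_Dset, P_iff, P_iff] at hx ⊢
  obtain ⟨⟨y, hy⟩, ⟨z, hz⟩⟩ := hx
  have ha0 : (α : F) ≠ 0 := Units.ne_zero _
  have hy0 : (y : F) ≠ 0 := Units.ne_zero _
  have hz0 : (z : F) ≠ 0 := Units.ne_zero _
  have hx1 : x - 1 ≠ 0 := by
    rw [hz]; exact mul_ne_zero (zpow_ne_zero _ ha0) (pow_ne_zero _ hz0)
  have hb0 : ((α : F)) ^ b ≠ 0 := zpow_ne_zero _ ha0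
  constructor
  · refine ⟨y * z⁻¹, ?_⟩
    rw [zpow_sub₀ ha0]
    push_cast
    rw [hz, hy]
    field_simp
  · refine ⟨z⁻¹, ?_⟩
    have hstep : x * (x - 1)⁻¹ - 1 = (x - 1)⁻¹ := by
      field_simp; ring
    rw [hstep, hz, zpow_neg]
    push_cast
    field_simp

lemma tau_invol {x : F} (hx0 : x ≠ 0) (hx1 : x - 1 ≠ 0) :
    (x * (x - 1)⁻¹) * (x * (x - 1)⁻¹ - 1)⁻¹ = x := by
  have hstep : x * (x - 1)⁻¹ - 1 = (x - 1)⁻¹ := by field_simp; ring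
  rw [hstep, inv_inv, mul_assoc, inv_mul_cancel₀ hx1, mul_one]

lemma D_tau {α : Fˣ} (a b : ℤ) : D α a b = D α (a - b) (-b) := by
  unfold D
  apply card_nbij' (fun x => x * (x - 1)⁻¹) (fun x => x * (x - 1)⁻¹)
  · exact fun x hx => tau_mem hx
  · intro x hx
    have := tau_mem hx
    rwa [show a - b - -b = a by ring, show (- -b) = b by ring] at this
  · intro x hx
    simp only [mem_coe] at hx
    rw [mem_Dset] at hx
    exact tau_invol (P_ne_zero hx.1) (P_ne_zero hx.2)
  · intro x hx
    simp only [mem_coe] at hx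
    rw [mem_Dset] at hx
    exact tau_invol (P_ne_zero hx.1) (P_ne_zero hx.2)

lemma card_shift {α : Fˣ} (a b c : ℤ) :
    (univ.filter fun z : F => P α a z ∧ P α b (z - ((α : F)) ^ c)).card = D α (a - c) (b - c) := by
  have ha0 : (α : F) ≠ 0 := Units.ne_zero _
  unfold D
  apply card_nbij' (fun z => ((α : F)) ^ (-c) * z) (fun x => ((α : F)) ^ c * x)
  · intro z hz
    simp only [mem_coe] at hz ⊢
    rw [mem_filter] at hz
    rw [mem_Dset]
    obtain ⟨-, h1, h2⟩ := hz
    constructor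
    · have := P_mul' (-c) h1
      rwa [show a + -c = a - c by ring] at this
    · have := P_mul' (-c) h2
      rwa [show b + -c = b - c by ring,
        show ((α : F)) ^ (-c) * (z - ((α : F)) ^ c) = ((α : F)) ^ (-c) * z - 1 by
          rw [mul_sub, ← zpow_add₀ ha0]; simp] at this
  · intro x hx
    simp only [mem_coe] at hx ⊢
    rw [mem_Dset] at hx
    rw [mem_filter]
    obtain ⟨h1, h2⟩ := hx
    refine ⟨mem_univ _, ?_, ?_⟩
    · have := P_mul' c h1
      rwa [show a - c + c = a by ring] at this
    · have := P_mul' c h2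
      rwa [show b - c + c = b by ring,
        show ((α : F)) ^ c * (x - 1) = ((α : F)) ^ c * x - ((α : F)) ^ c by ring] at this
  · intro z _
    beta_reduce
    rw [← mul_assoc, ← zpow_add₀ ha0]
    simp
  · intro x _
    beta_reduce
    rw [← mul_assoc, ← zpow_add₀ ha0]
    simp

lemma coset_card {α : Fˣ} (a b : ℤ) :
    (univ.filter (P α a)).card = (univ.filter (P α b)).card := by
  have ha0 : (α : F) ≠ 0 := Units.ne_zero _
  apply card_nbij' (fun x => ((α : F)) ^ (b - a) * x) (fun x => ((α : F)) ^ (a - b) * x)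
  · intro x hx
    simp only [mem_coe] at hx ⊢
    rw [mem_filter] at hx ⊢
    refine ⟨mem_univ _, ?_⟩
    have := P_mul' (b - a) hx.2
    rwa [show a + (b - a) = b by ring] at this
  · intro x hx
    simp only [mem_coe] at hx ⊢
    rw [mem_filter] at hx ⊢
    refine ⟨mem_univ _, ?_⟩
    have := P_mul' (a - b) hx.2
    rwa [show b + (a - b) = a by ring] at this
  · intro x _
    beta_reduce
    rw [← mul_assoc, ← zpow_add₀ ha0]
    simp
  · intro x _
    beta_reduce
    rw [← mul_assoc, ← zpow_add₀ ha0]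
    simp

lemma row_card {α : Fˣ} (hα : ∀ x : Fˣ, x ∈ Subgroup.zpowers α)
    (h8 : 8 ∣ Fintype.card F - 1) {a : ℤ} (h4 : ¬ (4:ℤ) ∣ a) :
    (univ.filter (P α a)).card = D α a 0 + D α a 1 + D α a 2 + D α a 3 := by
  have hdisj : ∀ b b' : ℤ, ¬ (4:ℤ) ∣ (b - b') → Disjoint (Dset α a b) (Dset α a b') := by
    intro b b' hbb
    rw [Finset.disjoint_left]
    intro x hx hx'
    rw [mem_Dset] at hx hx'
    exact hbb (P_dvd_of_both hα h8 hx.2 hx'.2)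
  have hsplit : univ.filter (P α a) = ((Dset α a 0 ∪ Dset α a 1) ∪ Dset α a 2) ∪ Dset α a 3 := by
    ext x
    simp only [mem_filter, mem_univ, true_and, mem_union, mem_Dset]
    constructor
    · intro hx
      have hx1 : x - 1 ≠ 0 := by
        intro h0
        have hx1' : x = 1 := by rwa [sub_eq_zero] at h0
        have hP0 : P α 0 x := ⟨1, by rw [hx1']; simp⟩
        have hd := P_dvd_of_both hα h8 hx hP0
        rw [sub_zero] at hd
        exact h4 hd
      obtain ⟨b, hb0, hb4, hPb⟩ := P_exists hα hx1
      interval_cases b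
      · exact Or.inl (Or.inl (Or.inl ⟨hx, hPb⟩))
      · exact Or.inl (Or.inl (Or.inr ⟨hx, hPb⟩))
      · exact Or.inl (Or.inr ⟨hx, hPb⟩)
      · exact Or.inr ⟨hx, hPb⟩
    · rintro (((⟨h, -⟩ | ⟨h, -⟩) | ⟨h, -⟩) | ⟨h, -⟩) <;> exact h
  rw [hsplit]
  rw [card_union_of_disjoint, card_union_of_disjoint, card_union_of_disjoint]
  · rfl
  · exact hdisj 0 1 (by norm_num)
  · refine Finset.disjoint_union_left.mpr ⟨hdisj 0 2 (by norm_num), hdisj 1 2 (by norm_num)⟩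
  · refine Finset.disjoint_union_left.mpr ⟨Finset.disjoint_union_left.mpr
      ⟨hdisj 0 3 (by norm_num), hdisj 1 3 (by norm_num)⟩, hdisj 2 3 (by norm_num)⟩


end GP4


/-- Let `GP(q,4)` (with `q ≡ 1 (mod 8)`, `α` a generator of `Fˣ`) be
quasi-strongly regular with common-neighbor parameters `c 1, c 2, c 3, c 4`, where
`c i = |N(u) ∩ N(v)|` whenever `u − v ∈ α^{i−1}(Fˣ)⁴`.  Then `c 2 + c 4 = 2·c 3`. -/
theorem generalizedPaley4_parameter_relation {F : Type*} [Field F] [Fintype F]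
    (hdvd : 8 ∣ Fintype.card F - 1)
    (α : Fˣ) (hα : ∀ x : Fˣ, x ∈ Subgroup.zpowers α)
    (G : SimpleGraph F)
    (hG : ∀ a b : F, G.Adj a b ↔ a ≠ b ∧ ∃ y : Fˣ, (y : F) ^ 4 = a - b)
    (c : ℕ → ℕ)
    (hc : ∀ (i : ℕ), 1 ≤ i → i ≤ 4 → ∀ u v : F,
      (∃ y : Fˣ, u - v = (α : F) ^ (i - 1) * (y : F) ^ 4) →
      (G.neighborFinset u ∩ G.neighborFinset v).card = c i) :
    c 2 + c 4 = 2 * c 3 := by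
  classical
  have hδ := GP4.neg_one_pow hα hdvd
  -- identify the parameters with difference counts
  have hNset : ∀ i : ℕ, 1 ≤ i → i ≤ 4 → c i = GP4.D α (1 - (i:ℤ)) (1 - (i:ℤ)) := by
    intro i h1 h4
    have hci := hc i h1 h4 ((α:F) ^ (i-1)) 0 ⟨1, by simp⟩
    have hset : G.neighborFinset ((α:F) ^ (i-1)) ∩ G.neighborFinset 0
        = Finset.univ.filter
            (fun z : F => GP4.P α 0 z ∧ GP4.P α 0 (z - ((α:F)) ^ (((i-1:ℕ)):ℤ))) := by
      ext z
      simp only [Finset.mem_inter, SimpleGraph.mem_neighborFinset, hG, Finset.mem_filter,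
        Finset.mem_univ, true_and]
      rw [zpow_natCast]
      constructor
      · rintro ⟨⟨hne1, y1, hy1⟩, ⟨hne2, y2, hy2⟩⟩
        constructor
        · have h0 : GP4.P α 0 (0 - z) :=
            GP4.P_iff.mpr ⟨y2, by rw [← hy2, zpow_zero, one_mul]⟩
          have h0' := GP4.P_neg' hδ h0
          rwa [neg_sub, sub_zero] at h0'
        · have h0 : GP4.P α 0 ((α:F)^(i-1) - z) :=
            GP4.P_iff.mpr ⟨y1, by rw [← hy1, zpow_zero, one_mul]⟩
          have h0' := GP4.P_neg' hδ h0
          rwa [neg_sub] at h0'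
      · rintro ⟨h1z, h2z⟩
        have hz0 : z ≠ 0 := GP4.P_ne_zero h1z
        have hzu : z - (α:F)^(i-1) ≠ 0 := GP4.P_ne_zero h2z
        refine ⟨⟨?_, ?_⟩, ?_, ?_⟩
        · intro h; exact hzu (by rw [h]; ring)
        · have := GP4.P_neg' hδ h2z
          rw [neg_sub] at this
          obtain ⟨y, hy⟩ := GP4.P_iff.mp this
          exact ⟨y, by rw [hy, zpow_zero, one_mul]⟩
        · exact fun h => hz0 h.symm
        · have := GP4.P_neg' hδ h1z
          obtain ⟨y, hy⟩ := GP4.P_iff.mp this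
          rw [zpow_zero, one_mul] at hy
          refine ⟨y, ?_⟩
          rw [zero_sub]
          exact hy.symm
    rw [hset, GP4.card_shift 0 0 (((i-1:ℕ)):ℤ)] at hci
    have hidx : (0:ℤ) - (((i-1:ℕ)):ℤ) = 1 - (i:ℤ) := by omega
    rw [hidx] at hci
    exact hci.symm
  have hC2 : c 2 = GP4.D α (-1) (-1) := by
    have := hNset 2 (by norm_num) (by norm_num); norm_num at this; exact this
  have hC3 : c 3 = GP4.D α (-2) (-2) := by
    have := hNset 3 (by norm_num) (by norm_num); norm_num at this; exact this
  have hC4 : c 4 = GP4.D α (-3) (-3) := by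
    have := hNset 4 (by norm_num) (by norm_num); norm_num at this; exact this
  -- identities between the D's
  have e2 : GP4.D α (-1) (-1) = GP4.D α 1 0 := by
    have t1 := GP4.D_tau (F := F) (α := α) (-1) (-1)
    norm_num at t1
    rw [t1]
    exact GP4.D_symm hδ 0 1
  have e4 : GP4.D α (-3) (-3) = GP4.D α 1 1 :=
    GP4.D_congr (by norm_num) (by norm_num)
  have e3 : GP4.D α (-2) (-2) = GP4.D α 2 2 :=
    GP4.D_congr (by norm_num) (by norm_num)
  have e3' : GP4.D α 2 2 = GP4.D α 2 0 := by
    have t1 := GP4.D_tau (F := F) (α := α) 2 2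
    norm_num at t1
    rw [t1]
    have t2 : GP4.D α 0 (-2) = GP4.D α 0 2 := GP4.D_congr (by norm_num) (by norm_num)
    rw [t2]
    exact GP4.D_symm hδ 0 2
  have e12 : GP4.D α 1 2 = GP4.D α 2 1 := GP4.D_symm hδ 1 2
  have e13 : GP4.D α 1 3 = GP4.D α 2 1 := by
    have t1 := GP4.D_tau (F := F) (α := α) 1 3
    norm_num at t1
    rw [t1]
    exact GP4.D_congr (by norm_num) (by norm_num)
  have e23 : GP4.D α 2 3 = GP4.D α 2 1 := by
    have t1 := GP4.D_tau (F := F) (α := α) 2 3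
    norm_num at t1
    rw [t1]
    have t2 : GP4.D α (-1) (-3) = GP4.D α 3 1 := GP4.D_congr (by norm_num) (by norm_num)
    rw [t2]
    rw [GP4.D_symm hδ 3 1]
    exact e13
  have row1 := GP4.row_card hα hdvd (α := α) (a := 1) (by norm_num)
  have row2 := GP4.row_card hα hdvd (α := α) (a := 2) (by norm_num)
  have rows := GP4.coset_card (F := F) (α := α) 1 2
  rw [row1, row2] at rows
  omega
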